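/- If a finite graph G admits a homomorphism to the cycle C_{2ℓ+1}, then G has an induced bipartite subgraph on at least (2ℓ/(2ℓ+1))·|V(G)| vertices. -/

import Mathlib

open SimpleGraph

lemma parity_lemma {n : ℕ} (a b : Fin (2 * n + 1)) (ha : a ≠ 0) (hb : b ≠ 0)
    (hab : (a - b).val = 1) : a.val % 2 ≠ b.val % 2 := by
  have h1 : a = b + (a - b) := by abel
  have h2 : a.val = (b.val + (a - b).val) % (2 * n + 1) := by
    conv_lhs => rw [h1]
    exact Fin.val_add _ _
  rw [hab] at h2
  have hav : a.val < 2 * n + 1 := a.isLt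
  have hbv : b.val < 2 * n + 1 := b.isLt
  have ha0 : a.val ≠ 0 := fun h => ha (Fin.ext h)
  have hb0 : b.val ≠ 0 := fun h => hb (Fin.ext h)
  rcases Nat.lt_or_ge (b.val + 1) (2 * n + 1) with hlt | hge
  · rw [Nat.mod_eq_of_lt hlt] at h2
    omega
  · have : b.val + 1 = 2 * n + 1 := by omega
    rw [this, Nat.mod_self] at h2
    omega

/-- If a finite graph `G` admits a homomorphism to the cycle `C_{2ℓ+1}`, then `G` has an
induced bipartite subgraph on at least `(2ℓ/(2ℓ+1)) · |V(G)|` vertices. -/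
theorem statement7 {V : Type*} [Fintype V] (ℓ : ℕ) (G : SimpleGraph V)
    (h : Nonempty (G →g cycleGraph (2 * ℓ + 1))) :
    ∃ S : Finset V,
      (G.induce (S : Set V)).Colorable 2 ∧
      (2 * ℓ : ℝ) / (2 * ℓ + 1) * Fintype.card V ≤ S.card := by
  obtain ⟨f⟩ := h
  classical
  set n := 2 * ℓ + 1 with hn
  let fib : Fin n → Finset V := fun i => Finset.univ.filter (fun v => f v = i)
  obtain ⟨i, -, hi⟩ := Finset.exists_min_image Finset.univ (fun i => (fib i).card)
    ⟨0, Finset.mem_univ 0⟩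
  set S : Finset V := Finset.univ \ fib i with hS
  have hmemS : ∀ v : V, v ∈ S ↔ f v ≠ i := by
    intro v
    simp [hS, fib]
  refine ⟨S, ?_, ?_⟩
  · -- 2-colorable
    refine (SimpleGraph.Coloring.mk
      (fun v : (S : Set V) => (⟨(f v.1 - i).val % 2, Nat.mod_lt _ (by norm_num)⟩ : Fin 2))
      ?_).colorable
    rintro ⟨u, hu⟩ ⟨v, hv⟩ hadj
    have hGadj : G.Adj u v := hadj
    have hcyc := f.map_adj hGadj
    rw [cycleGraph_adj'] at hcyc
    have hu' : f u - i ≠ 0 := by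
      rw [sub_ne_zero]; exact (hmemS u).mp hu
    have hv' : f v - i ≠ 0 := by
      rw [sub_ne_zero]; exact (hmemS v).mp hv
    have hsub : (f u - i) - (f v - i) = f u - f v := by abel
    have hsub' : (f v - i) - (f u - i) = f v - f u := by abel
    intro hEq
    have hEq' : (f u - i).val % 2 = (f v - i).val % 2 := by
      simpa [Fin.ext_iff] using hEq
    rcases hcyc with h1 | h1
    · exact parity_lemma (f u - i) (f v - i) hu' hv' (by rw [hsub]; exact h1) hEq'
    · exact parity_lemma (f v - i) (f u - i) hv' hu' (by rw [hsub']; exact h1) hEq'.symm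
  · -- counting
    have hsum : Fintype.card V = ∑ j : Fin n, (fib j).card := by
      rw [← Finset.card_univ]
      exact Finset.card_eq_sum_card_fiberwise (fun x _ => Finset.mem_univ (f x))
    have hmin : n * (fib i).card ≤ Fintype.card V := by
      calc n * (fib i).card = ∑ _j : Fin n, (fib i).card := by
            simp [Finset.sum_const, Finset.card_univ, mul_comm]
        _ ≤ ∑ j : Fin n, (fib j).card := Finset.sum_le_sum (fun j _ => hi j (Finset.mem_univ j))
        _ = Fintype.card V := hsum.symm
    have hcardS : S.card = Fintype.card V - (fib i).card := by
      rw [hS, Finset.card_sdiff_of_subset (Finset.subset_univ _), Finset.card_univ]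
    have hle : (fib i).card ≤ Fintype.card V := by
      calc (fib i).card ≤ n * (fib i).card := Nat.le_mul_of_pos_left _ (by omega)
        _ ≤ Fintype.card V := hmin
    have hS' : (S.card : ℝ) = (Fintype.card V : ℝ) - (fib i).card := by
      rw [hcardS]; push_cast [hle]; ring
    rw [hS', div_mul_eq_mul_div, div_le_iff₀ (by positivity)]
    have hmin' : (n : ℝ) * (fib i).card ≤ (Fintype.card V : ℝ) := by exact_mod_cast hmin
    have hn' : (n : ℝ) = 2 * ℓ + 1 := by exact_mod_cast congrArg Nat.cast hn
    nlinarith [hmin', Nat.cast_nonneg (α := ℝ) (Fintype.card V)]
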